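/- arXiv:math/9209220 — 3 statements merged into one kernel-verified Lean document; each statement's English description precedes it below -/
import Mathlib

section
/- Let f : X → X be a homeomorphism of a compact metric space and x ∈ X. Then the closure of the orbit of x is a minimal set if and only if for every ε > 0 there exists N such that for all n ≥ 0 there is some i with 0 ≤ i ≤ N and d(f^{n+i}(x), x) < ε. -/
section
variable {X : Type*} [MetricSpace X] (f : X ≃ₜ X)

lemma aux_coe_pow (k : ℕ) : ⇑(f.toEquiv ^ k) = (⇑f)^[k] := by
  have : ⇑(f.toEquiv ^ k) = (⇑f.toEquiv)^[k] := Equiv.Perm.coe_pow _ _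
  simpa using this

lemma aux_iter (k : ℕ) (z : X) : (⇑f)^[k] z = (f.toEquiv ^ (k : ℤ)) z := by
  rw [zpow_natCast, aux_coe_pow]

lemma aux_cont (n : ℤ) : Continuous fun z : X => (f.toEquiv ^ n) z := by
  rcases n with m | m
  · rw [Int.ofNat_eq_natCast, zpow_natCast]
    rw [show (fun z : X => (f.toEquiv ^ m) z) = ⇑(f.toEquiv ^ m) from rfl, aux_coe_pow]
    exact f.continuous.iterate m
  · rw [zpow_negSucc]
    have h1 : (f.toEquiv ^ (m+1))⁻¹ = (f.symm.toEquiv) ^ (m+1) := by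
      rw [← inv_pow]; rfl
    rw [show (fun z : X => ((f.toEquiv ^ (m+1)))⁻¹ z) = ⇑((f.toEquiv ^ (m+1)))⁻¹ from rfl,
      h1, aux_coe_pow]
    exact f.symm.continuous.iterate _

lemma aux_inv (m : ℤ) {z y : X}
    (hy : y ∈ closure (Set.range fun n : ℤ => (f.toEquiv ^ n) z)) :
    (f.toEquiv ^ m) y ∈ closure (Set.range fun n : ℤ => (f.toEquiv ^ n) z) := by
  have himg : (fun w => (f.toEquiv ^ m) w) '' (Set.range fun n : ℤ => (f.toEquiv ^ n) z)
      ⊆ Set.range fun n : ℤ => (f.toEquiv ^ n) z := by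
    rintro _ ⟨_, ⟨n, rfl⟩, rfl⟩
    refine ⟨m + n, ?_⟩
    show (f.toEquiv ^ (m + n)) z = (f.toEquiv ^ m) ((f.toEquiv ^ n) z)
    rw [zpow_add, Equiv.Perm.mul_apply]
  have h1 : (f.toEquiv ^ m) y ∈
      (fun w => (f.toEquiv ^ m) w) '' closure (Set.range fun n : ℤ => (f.toEquiv ^ n) z) :=
    ⟨y, hy, rfl⟩
  exact closure_mono himg (image_closure_subset_closure_image (aux_cont f m) h1)

lemma aux_mono {z y : X}
    (hy : y ∈ closure (Set.range fun n : ℤ => (f.toEquiv ^ n) z)) :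
    closure (Set.range fun n : ℤ => (f.toEquiv ^ n) y)
      ⊆ closure (Set.range fun n : ℤ => (f.toEquiv ^ n) z) :=
  closure_minimal (Set.range_subset_iff.2 fun n => aux_inv f n hy) isClosed_closure

end

/-- Gottschalk's characterization: for a homeomorphism `f` of a compact metric space and a
point `x`, the orbit closure of `x` is a minimal set iff for every `ε > 0` there is `N` such
that every stretch `n, n+1, …, n+N` of iterates contains an `i` with `d (f^{n+i} x, x) < ε`. -/
theorem stmt_12 {X : Type*} [MetricSpace X] [CompactSpace X] (f : X ≃ₜ X) (x : X) :
    (∀ y ∈ closure (Set.range fun n : ℤ => (f.toEquiv ^ n) x),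
        closure (Set.range fun n : ℤ => (f.toEquiv ^ n) y) =
          closure (Set.range fun n : ℤ => (f.toEquiv ^ n) x)) ↔
      ∀ ε > 0, ∃ N : ℕ, ∀ n : ℕ, ∃ i ≤ N, dist ((⇑f)^[n + i] x) x < ε := by
  constructor
  · -- minimal → syndetic returns
    intro hmin ε hε
    set U : ℤ → Set X := fun k => (fun z => (f.toEquiv ^ k) z) ⁻¹' Metric.ball x ε with hU
    have hUopen : ∀ k, IsOpen (U k) := fun k => (Metric.isOpen_ball).preimage (aux_cont f k)
    have hxmem : ∀ z : X, z ∈ closure (Set.range fun n : ℤ => (f.toEquiv ^ n) z) :=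
      fun z => subset_closure ⟨0, by simp⟩
    have hcover : closure (Set.range fun n : ℤ => (f.toEquiv ^ n) x) ⊆ ⋃ k, U k := by
      intro y hy
      have hx' : x ∈ closure (Set.range fun n : ℤ => (f.toEquiv ^ n) y) := by
        rw [hmin y hy]; exact hxmem x
      rw [Metric.mem_closure_iff] at hx'
      obtain ⟨b, ⟨n, rfl⟩, hb⟩ := hx' ε hε
      exact Set.mem_iUnion.2 ⟨n, by simpa [U, Metric.mem_ball, dist_comm] using hb⟩
    have hK : IsCompact (closure (Set.range fun n : ℤ => (f.toEquiv ^ n) x)) :=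
      isClosed_closure.isCompact
    obtain ⟨t, ht⟩ := hK.elim_finite_subcover U hUopen hcover
    set M : ℕ := t.sup fun k => k.natAbs with hM
    refine ⟨2 * M, fun n => ?_⟩
    set y : X := (f.toEquiv ^ ((n : ℤ) + M)) x with hy
    have hyK : y ∈ closure (Set.range fun n : ℤ => (f.toEquiv ^ n) x) :=
      subset_closure ⟨(n : ℤ) + M, rfl⟩
    obtain ⟨k, hk, hball⟩ := Set.mem_iUnion₂.1 (ht hyK)
    have hkM : k.natAbs ≤ M := Finset.le_sup hk
    refine ⟨(k + M).toNat, by omega, ?_⟩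
    have hcast : ((n + (k + M).toNat : ℕ) : ℤ) = k + ((n : ℤ) + M) := by
      push_cast; omega
    have : dist ((f.toEquiv ^ (k + ((n : ℤ) + M))) x) x < ε := by
      rw [zpow_add, Equiv.Perm.mul_apply]
      exact hball
    rwa [aux_iter, hcast]
  · -- syndetic returns → minimal
    intro H y hy
    -- Step 1: orbit closure ⊆ forward orbit closure
    have hsub : closure (Set.range fun n : ℤ => (f.toEquiv ^ n) x)
        ⊆ closure (Set.range fun n : ℕ => (⇑f)^[n] x) := by
      refine closure_minimal (Set.range_subset_iff.2 fun m => ?_) isClosed_closure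
      rcases le_or_gt 0 m with hm | hm
      · refine subset_closure ⟨m.toNat, ?_⟩
        show (⇑f)^[m.toNat] x = (f.toEquiv ^ m) x
        rw [aux_iter, Int.toNat_of_nonneg hm]
      · set k : ℕ := (-m).toNat with hkdef
        have hmk : m = -(k : ℤ) := by omega
        have heq : (f.toEquiv ^ m) x = (⇑f.symm)^[k] x := by
          rw [hmk, zpow_neg, ← inv_zpow, zpow_natCast]
          have : (f.toEquiv⁻¹ : Equiv.Perm X) = f.symm.toEquiv := rfl
          rw [this]
          have := aux_coe_pow f.symm k
          exact congrFun this x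
        rw [heq]
        -- x ∈ closure of { f^[m+k] x : m }
        have hx2 : x ∈ closure (Set.range fun m : ℕ => (⇑f)^[m + k] x) := by
          rw [Metric.mem_closure_iff]
          intro δ hδ
          obtain ⟨N, hN⟩ := H δ hδ
          obtain ⟨i, _, hdist⟩ := hN k
          exact ⟨(⇑f)^[i + k] x, ⟨i, rfl⟩, by rw [dist_comm, Nat.add_comm i k]; exact hdist⟩
        have himg : (⇑f.symm)^[k] '' (Set.range fun m : ℕ => (⇑f)^[m + k] x)
            ⊆ Set.range fun n : ℕ => (⇑f)^[n] x := by
          rintro _ ⟨_, ⟨m, rfl⟩, rfl⟩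
          refine ⟨m, ?_⟩
          have h0 : Function.LeftInverse ⇑f.symm ⇑f := f.symm_apply_apply
          have hLI : Function.LeftInverse (⇑f.symm)^[k] (⇑f)^[k] := h0.iterate k
          show (⇑f)^[m] x = (⇑f.symm)^[k] ((⇑f)^[m + k] x)
          rw [Nat.add_comm m k, Function.iterate_add_apply]
          exact (hLI _).symm
        have h1 : (⇑f.symm)^[k] x ∈
            (⇑f.symm)^[k] '' closure (Set.range fun m : ℕ => (⇑f)^[m + k] x) := ⟨x, hx2, rfl⟩
        exact closure_mono himg
          (image_closure_subset_closure_image (f.symm.continuous.iterate k) h1)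
    -- Step 2: x ∈ closure (orbit y)
    have hx_in : x ∈ closure (Set.range fun n : ℤ => (f.toEquiv ^ n) y) := by
      rw [Metric.mem_closure_iff]
      intro ε hε
      obtain ⟨N, hN⟩ := H (ε / 2) (half_pos hε)
      -- uniform δ for all iterates up to N
      have key : ∀ i : ℕ, ∃ δ > 0, ∀ a b : X, dist a b < δ →
          dist ((⇑f)^[i] a) ((⇑f)^[i] b) < ε / 2 := by
        intro i
        have hUC : UniformContinuous (⇑f)^[i] :=
          CompactSpace.uniformContinuous_of_continuous (f.continuous.iterate i)
        obtain ⟨δ, hδ, h⟩ := Metric.uniformContinuous_iff.1 hUC (ε / 2) (half_pos hε)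
        exact ⟨δ, hδ, fun a b hab => h hab⟩
      choose δf hδfpos hδf using key
      set δ : ℝ := (Finset.range (N + 1)).inf' ⟨0, Finset.mem_range.2 (Nat.succ_pos N)⟩ δf
        with hδdef
      have hδpos : 0 < δ := by
        rw [hδdef]
        exact (Finset.lt_inf'_iff _).2 fun i _ => hδfpos i
      have hδle : ∀ i ≤ N, δ ≤ δf i := fun i hi =>
        Finset.inf'_le _ (Finset.mem_range.2 (Nat.lt_succ_of_le hi))
      -- approximate y by a forward iterate
      have hyC : y ∈ closure (Set.range fun n : ℕ => (⇑f)^[n] x) := hsub hy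
      rw [Metric.mem_closure_iff] at hyC
      obtain ⟨b, ⟨m, rfl⟩, hb⟩ := hyC δ hδpos
      obtain ⟨i, hi, hrec⟩ := hN m
      have h1 : dist ((⇑f)^[i] y) ((⇑f)^[i] ((⇑f)^[m] x)) < ε / 2 :=
        hδf i y _ (lt_of_lt_of_le hb (hδle i hi))
      have h2 : (⇑f)^[i] ((⇑f)^[m] x) = (⇑f)^[m + i] x := by
        rw [Nat.add_comm m i, Function.iterate_add_apply]
      refine ⟨(f.toEquiv ^ (i : ℤ)) y, ⟨i, rfl⟩, ?_⟩
      rw [← aux_iter, dist_comm]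
      calc dist ((⇑f)^[i] y) x ≤ dist ((⇑f)^[i] y) ((⇑f)^[m + i] x) + dist ((⇑f)^[m + i] x) x :=
            dist_triangle _ _ _
        _ < ε / 2 + ε / 2 := by rw [← h2] at hrec ⊢; exact add_lt_add h1 hrec
        _ = ε := add_halves ε
    exact Set.Subset.antisymm (aux_mono f hy) (aux_mono f hx_in)
end

section
/- Let α be irrational and U regular open with m(Fr(U)) = 0. Suppose ψ : Λ → S¹ is a continuous semiconjugacy from (Λ, σ) onto (S¹, R_α) that is injective on ψ^{-1}(B), where B ⊆ S¹ has full Haar measure and is ψ-saturated. Then (Λ, σ) is uniquely ergodic: any two σ-invariant Borel probability measures on Λ coincide. -/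
open MeasureTheory

section aux
open AddSubgroup Filter Topology
open scoped NNReal ENNReal

private lemma dense_zmult_aux {α : ℝ} (hα : Irrational α) :
    Dense ((zmultiples ((α : UnitAddCircle))) : Set UnitAddCircle) := by
  have hG : Dense ((zmultiples α ⊔ zmultiples (1:ℝ) : AddSubgroup ℝ) : Set ℝ) := by
    rcases (zmultiples α ⊔ zmultiples (1:ℝ)).dense_or_cyclic with h | ⟨a, ha⟩
    · exact h
    · exfalso
      rw [← zmultiples_eq_closure] at ha
      have hαmem : α ∈ zmultiples a := ha ▸ le_sup_left (α := AddSubgroup ℝ) (mem_zmultiples α)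
      have h1mem : (1:ℝ) ∈ zmultiples a := ha ▸ le_sup_right (α := AddSubgroup ℝ) (mem_zmultiples 1)
      obtain ⟨m, hm⟩ := hαmem
      obtain ⟨n, hn⟩ := h1mem
      simp only [zsmul_eq_mul] at hm hn
      have hn0 : (n : ℝ) ≠ 0 := by
        rintro h
        rw [h, zero_mul] at hn
        exact one_ne_zero hn.symm
      apply hα
      refine ⟨(m : ℚ) / (n : ℚ), ?_⟩
      have ha' : a = 1 / n := by field_simp at hn ⊢; linarith
      rw [← hm, ha']
      push_cast
      field_simp
  have hq : DenseRange ((↑) : ℝ → UnitAddCircle) :=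
    Function.Surjective.denseRange (fun x => QuotientAddGroup.mk_surjective x)
  have himg : ((↑) : ℝ → UnitAddCircle) ''
      ((zmultiples α ⊔ zmultiples (1:ℝ) : AddSubgroup ℝ) : Set ℝ)
      ⊆ (zmultiples ((α : UnitAddCircle)) : Set UnitAddCircle) := by
    rintro - ⟨x, hx, rfl⟩
    rw [SetLike.mem_coe, AddSubgroup.mem_sup] at hx
    obtain ⟨y, ⟨m, rfl⟩, z, ⟨n, rfl⟩, rfl⟩ := hx
    refine ⟨m, ?_⟩
    have h1 : (((n • (1:ℝ) : ℝ)) : UnitAddCircle) = 0 := by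
      simpa using AddCircle.coe_zsmul_period_eq_zero (p := (1:ℝ)) n
    push_cast [h1]
    simp [h1]
  exact Dense.mono himg (hq.dense_image continuous_quotient_mk' hG)

private lemma circle_unique_aux {α : ℝ} (hα : Irrational α) (μ' : Measure UnitAddCircle)
    [IsProbabilityMeasure μ']
    (h : Measure.map (fun x => (α : UnitAddCircle) + x) μ' = μ') :
    μ' = volume := by
  set S : Set UnitAddCircle := {g | Measure.map (fun x => g + x) μ' = μ'} with hS
  have hmap : ∀ g : UnitAddCircle, Measurable (fun x : UnitAddCircle => g + x) :=
    fun g => (continuous_const.add continuous_id).measurable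
  have hzero : (0 : UnitAddCircle) ∈ S := by simp [hS, Measure.map_id]
  have hadd : ∀ g h', g ∈ S → h' ∈ S → g + h' ∈ S := by
    intro g h' hg hh'
    have : (fun x : UnitAddCircle => g + h' + x) = (fun x => g + x) ∘ (fun x => h' + x) := by
      funext x; simp [add_assoc]
    simp only [hS, Set.mem_setOf_eq, this]
    rw [← Measure.map_map (hmap g) (hmap h'), hh', hg]
  have hneg : ∀ g, g ∈ S → -g ∈ S := by
    intro g hg
    have : Measure.map (fun x => -g + x) (Measure.map (fun x => g + x) μ') = μ' := by
      rw [Measure.map_map (hmap (-g)) (hmap g)]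
      have : ((fun x : UnitAddCircle => -g + x) ∘ (fun x => g + x)) = id := by
        funext x; simp
      rw [this, Measure.map_id]
    rw [hg] at this
    exact this
  have hdense : Dense ((zmultiples ((α : UnitAddCircle))) : Set UnitAddCircle) :=
    dense_zmult_aux hα
  have hsub : ((zmultiples ((α : UnitAddCircle))) : Set UnitAddCircle) ⊆ S := by
    rintro - ⟨m, rfl⟩
    induction m using Int.induction_on with
    | zero => simpa using hzero
    | succ n ih =>
        show ((n : ℤ) + 1) • (α : UnitAddCircle) ∈ S
        have e : ((n : ℤ) + 1) • (α : UnitAddCircle) = (n : ℤ) • (α : UnitAddCircle) + ↑α := by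
          rw [add_zsmul, one_zsmul]
        rw [e]; exact hadd _ _ ih h
    | pred n ih =>
        show (-(n : ℤ) - 1) • (α : UnitAddCircle) ∈ S
        have e : (-(n : ℤ) - 1) • (α : UnitAddCircle) = (-(n:ℤ)) • (α : UnitAddCircle) + -↑α := by
          rw [sub_zsmul, one_zsmul]
        rw [e]; exact hadd _ _ ih (hneg _ h)
  have hall : ∀ g : UnitAddCircle, g ∈ S := by
    intro g
    obtain ⟨u, hu, hlim⟩ := mem_closure_iff_seq_limit.mp (hdense g)
    have huS : ∀ n, u n ∈ S := fun n => hsub (hu n)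
    refine ext_of_forall_lintegral_eq_of_IsFiniteMeasure (fun f => ?_)
    have key : ∀ b : UnitAddCircle, ∫⁻ x, (f x : ℝ≥0∞) ∂(Measure.map (fun x => b + x) μ')
        = ∫⁻ x, ((f (b + x) : ℝ≥0) : ℝ≥0∞) ∂μ' := fun b =>
      lintegral_map (by fun_prop) (hmap b)
    rw [key]
    have hconst : ∀ n, ∫⁻ x, ((f (u n + x) : ℝ≥0) : ℝ≥0∞) ∂μ' = ∫⁻ x, (f x : ℝ≥0∞) ∂μ' := by
      intro n
      rw [← key, huS n]
    have htend : Filter.Tendsto (fun n => ∫⁻ x, ((f (u n + x) : ℝ≥0) : ℝ≥0∞) ∂μ') atTop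
        (𝓝 (∫⁻ x, ((f (g + x) : ℝ≥0) : ℝ≥0∞) ∂μ')) := by
      apply tendsto_lintegral_of_dominated_convergence (fun _ => ((nndist f 0 : ℝ≥0) : ℝ≥0∞))
      · intro n; fun_prop
      · intro n
        filter_upwards with x
        exact ENNReal.coe_le_coe.mpr (BoundedContinuousFunction.NNReal.upper_bound f _)
      · simp [edist_ne_top]
      · filter_upwards with x
        have h1 : Filter.Tendsto (fun n => u n + x) atTop (𝓝 (g + x)) :=
          (hlim.add tendsto_const_nhds)
        exact (ENNReal.continuous_coe.tendsto _).comp ((f.continuous.tendsto _).comp h1)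
    simp only [hconst] at htend
    exact tendsto_nhds_unique htend tendsto_const_nhds
  haveI : μ'.IsAddLeftInvariant := ⟨fun g => hall g⟩
  have heq := MeasureTheory.Measure.isAddInvariant_eq_smul_of_compactSpace μ' volume
  have huniv := congrArg (fun m : Measure UnitAddCircle => m Set.univ) heq
  simp only [Measure.smul_apply, measure_univ, smul_eq_mul] at huniv
  have hc : μ'.addHaarScalarFactor volume = 1 := by
    have h2 : (μ'.addHaarScalarFactor volume : ℝ≥0∞) = 1 := by
      simpa [ENNReal.smul_def] using huniv.symm
    exact_mod_cast h2
  rw [heq, hc, one_smul]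

end aux

/-- If `(Λ, T)` is a compact system with a continuous semiconjugacy `ψ` onto the irrational
rotation `(S¹, R_α)` that is injective on `ψ⁻¹ B` for a full-measure set `B`, then `(Λ, T)` is
uniquely ergodic: any two `T`-invariant Borel probability measures coincide. -/
theorem stmt_15 {Λ : Type*} [TopologicalSpace Λ] [CompactSpace Λ] [TopologicalSpace.MetrizableSpace Λ]
    [MeasurableSpace Λ] [BorelSpace Λ] (T : Λ ≃ₜ Λ)
    (α : ℝ) (hα : Irrational α)
    (ψ : Λ → UnitAddCircle) (hψc : Continuous ψ) (hψs : Function.Surjective ψ)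
    (hsemi : ∀ y, ψ (T y) = ψ y + (α : UnitAddCircle))
    (B : Set UnitAddCircle) (hBmeas : MeasurableSet B) (hBfull : volume B = 1)
    (hinj : Set.InjOn ψ (ψ ⁻¹' B)) :
    ∀ μ ν : Measure Λ, IsProbabilityMeasure μ → IsProbabilityMeasure ν →
      Measure.map T μ = μ → Measure.map T ν = ν → μ = ν := by
  intro μ ν hμ hν hTμ hTν
  letI := TopologicalSpace.metrizableSpaceMetric Λ
  haveI : PolishSpace Λ := inferInstance
  have hψm : Measurable ψ := hψc.measurable
  -- the pushforward of any invariant probability measure is Haar measure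
  have key : ∀ (μ : Measure Λ), IsProbabilityMeasure μ → Measure.map T μ = μ →
      Measure.map ψ μ = volume := by
    intro μ hμ hTμ
    haveI := hμ
    haveI : IsProbabilityMeasure (Measure.map ψ μ) :=
      Measure.isProbabilityMeasure_map hψm.aemeasurable
    apply circle_unique_aux hα
    rw [Measure.map_map (by fun_prop) hψm]
    have hcomp : ((fun x : UnitAddCircle => (α : UnitAddCircle) + x) ∘ ψ) = ψ ∘ T := by
      funext y
      simp [Function.comp, hsemi y, add_comm]
    rw [hcomp, ← Measure.map_map hψm T.continuous.measurable, hTμ]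
  -- each invariant probability measure is determined
  have main : ∀ (μ : Measure Λ), IsProbabilityMeasure μ → Measure.map ψ μ = volume →
      ∀ s : Set Λ, MeasurableSet s → μ s = volume (ψ '' (s ∩ ψ ⁻¹' B)) := by
    intro μ hμ hpush s hs
    haveI := hμ
    set C : Set Λ := ψ ⁻¹' B with hC
    have hCmeas : MeasurableSet C := hψm hBmeas
    have hCfull : μ C = 1 := by
      have := Measure.map_apply hψm hBmeas (μ := μ)
      rw [hpush] at this
      rw [hC, ← this, hBfull]
    have hCc : μ Cᶜ = 0 := by
      rw [measure_compl hCmeas (measure_ne_top μ C), hCfull, measure_univ, tsub_self]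
    have hDmeas : MeasurableSet (ψ '' (s ∩ C)) :=
      (hs.inter hCmeas).image_of_continuousOn_injOn hψc.continuousOn
        (hinj.mono Set.inter_subset_right)
    have hpre : ψ ⁻¹' (ψ '' (s ∩ C)) ∩ C = s ∩ C := by
      apply Set.Subset.antisymm
      · rintro x ⟨⟨y, hy, hxy⟩, hxC⟩
        rwa [← hinj hy.2 hxC hxy]
      · intro x hx
        exact ⟨Set.mem_image_of_mem ψ hx, hx.2⟩
    calc μ s = μ (s ∩ C) := (measure_inter_conull hCc).symm
      _ = μ (ψ ⁻¹' (ψ '' (s ∩ C)) ∩ C) := by rw [hpre]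
      _ = μ (ψ ⁻¹' (ψ '' (s ∩ C))) := measure_inter_conull hCc
      _ = (Measure.map ψ μ) (ψ '' (s ∩ C)) := (Measure.map_apply hψm hDmeas).symm
      _ = volume (ψ '' (s ∩ C)) := by rw [hpush]
  ext s hs
  rw [main μ hμ (key μ hμ hTμ) s hs, main ν hν (key ν hν hTν) s hs]
end

section
/- For each sequence γ in the Hilbert cube H = {γ ∈ ℝ^ℕ : 0 ≤ γᵢ ≤ 1/(i+2) for all i}, define U_γ = ⋃_{i∈ℕ} (1/(i+2) − γᵢ³, 1/(i+2) + γᵢ³) ⊆ S¹. Then the map γ ↦ U_γ from H (product topology) to regular open sets with metric d(U,V) = m(U △ V) is continuous and injective. -/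
open MeasureTheory

/-- The regular open set `U_γ = ⋃ i, (1/(i+2) − γᵢ³, 1/(i+2) + γᵢ³)` associated to a point
`γ` of the Hilbert cube `H = ∏ᵢ [0, 1/(i+2)]`. -/
noncomputable def Ugamma (γ : ℕ → ℝ) : Set UnitAddCircle :=
  ⋃ i : ℕ, (fun x : ℝ => (x : UnitAddCircle)) ''
    Set.Ioo (1 / ((i : ℝ) + 2) - (γ i) ^ 3) (1 / ((i : ℝ) + 2) + (γ i) ^ 3)

open Set

section Aux

lemma hc_pos (i : ℕ) : 0 < 1 / ((i:ℝ) + 2) := by positivity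

lemma hc_le (i : ℕ) : 1 / ((i:ℝ) + 2) ≤ 1 / 2 := by
  apply one_div_le_one_div_of_le two_pos
  have : (0:ℝ) ≤ (i:ℝ) := Nat.cast_nonneg i
  linarith

lemma interval_subset {i : ℕ} {r : ℝ} (h : r ≤ (1/((i:ℝ)+2))^3) :
    Set.Ioo (1/((i:ℝ)+2) - r) (1/((i:ℝ)+2) + r) ⊆ Set.Ioo 0 1 := by
  intro x hx
  have hp := hc_pos i
  have hl := hc_le i
  have hsq : (1/((i:ℝ)+2))^2 ≤ 1/4 := by nlinarith
  have hcube : (1/((i:ℝ)+2))^3 ≤ (1/((i:ℝ)+2)) / 4 := by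
    nlinarith [mul_le_mul_of_nonneg_left hsq hp.le]
  exact ⟨by nlinarith [hx.1], by nlinarith [hx.2]⟩

lemma sep {i j : ℕ} (hij : i < j) :
    1/((j:ℝ)+2) + (1/((j:ℝ)+2))^3 < 1/((i:ℝ)+2) - (1/((i:ℝ)+2))^3 := by
  set n : ℝ := (i:ℝ) + 2 with hn
  set m : ℝ := (j:ℝ) + 2 with hm
  have h2 : (2:ℝ) ≤ n := by
    show (2:ℝ) ≤ (i:ℝ) + 2
    have : (0:ℝ) ≤ (i:ℝ) := Nat.cast_nonneg i
    linarith
  have hnm : n + 1 ≤ m := by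
    show (i:ℝ) + 2 + 1 ≤ (j:ℝ) + 2
    have : (i:ℝ) + 1 ≤ (j:ℝ) := by exact_mod_cast Nat.succ_le_of_lt hij
    linarith
  have hn0 : (0:ℝ) < n := by linarith
  have hm0 : (0:ℝ) < m := by linarith
  have e1 : 1/m ≤ 1/(n+1) := one_div_le_one_div_of_le (by linarith) hnm
  have e2 : (1/m)^3 ≤ (1/(n+1))^3 := by
    apply pow_le_pow_left₀ (by positivity) e1
  have key : (1/n)^3 + (1/(n+1))^3 < 1/(n*(n+1)) := by
    simp only [div_pow, one_pow]
    rw [div_add_div _ _ (by positivity) (by positivity),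
      div_lt_div_iff₀ (by positivity) (by positivity)]
    have hb : (0:ℝ) ≤ n - 2 := by linarith
    have b1 : 2*n^3 ≤ n^4 := by nlinarith [mul_nonneg (pow_pos hn0 3).le hb]
    have b2 : 2*n^2 ≤ n^3 := by nlinarith [mul_nonneg (pow_pos hn0 2).le hb]
    have b3 : 2*n ≤ n^2 := by nlinarith [mul_nonneg hn0.le hb]
    have h4 : (0:ℝ) < n^4 - 2*n^2 - 3*n - 1 := by linarith
    nlinarith [mul_pos (mul_pos hn0 (show (0:ℝ) < n+1 by linarith)) h4]
  have tele : 1/(n*(n+1)) = 1/n - 1/(n+1) := by field_simp; ring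
  linarith

lemma cube_diff {a b : ℝ} (ha : 0 ≤ a) (ha' : a ≤ 1/2) (hb : 0 ≤ b) (hb' : b ≤ 1/2) :
    |a^3 - b^3| ≤ |a - b| := by
  have hfac : a^3 - b^3 = (a-b)*(a^2+a*b+b^2) := by ring
  rw [hfac, abs_mul]
  have h2 : |a^2+a*b+b^2| ≤ 1 := by rw [abs_of_nonneg (by positivity)]; nlinarith
  calc |a-b| * |a^2+a*b+b^2| ≤ |a-b| * 1 := mul_le_mul_of_nonneg_left h2 (abs_nonneg _)
    _ = |a-b| := mul_one _

lemma inj_on_coe : Set.InjOn (fun x : ℝ => (x : UnitAddCircle)) (Set.Ico 0 1) := by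
  haveI : Fact ((0:ℝ) < 1) := ⟨one_pos⟩
  intro x hx y hy h
  exact (AddCircle.coe_eq_coe_iff_of_mem_Ico (p := 1) (a := 0)
    (by simpa using hx) (by simpa using hy)).mp h

lemma volume_image_eq {s : Set ℝ} (hs : MeasurableSet s) (h : s ⊆ Set.Ioo 0 1) :
    volume ((fun x : ℝ => (x : UnitAddCircle)) '' s) = volume s := by
  haveI : Fact ((0:ℝ) < 1) := ⟨one_pos⟩
  have hIoc : s ⊆ Set.Ioc 0 (0 + 1) := fun x hx => by
    have := h hx; exact ⟨this.1, by simpa using this.2.le⟩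
  have himg : (fun x : ℝ => (x : UnitAddCircle)) '' s
      = (AddCircle.measurableEquivIoc 1 0) ⁻¹' {y | (y : ℝ) ∈ s} := by
    ext z
    constructor
    · rintro ⟨x, hx, rfl⟩
      have hx' : x ∈ Set.Ioc 0 (0 + 1) := hIoc hx
      have : (AddCircle.equivIoc 1 0) (x : UnitAddCircle) = ⟨x, hx'⟩ := by
        rw [Equiv.apply_eq_iff_eq_symm_apply]; rfl
      show ((AddCircle.equivIoc 1 0) (x : UnitAddCircle) : ℝ) ∈ s
      rw [this]; exact hx
    · intro hz
      refine ⟨((AddCircle.equivIoc 1 0) z : ℝ), hz, ?_⟩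
      exact (AddCircle.equivIoc 1 0).symm_apply_apply z
  have hmeas : MeasurableSet ((fun x : ℝ => (x : UnitAddCircle)) '' s) := by
    rw [himg]
    exact (AddCircle.measurableEquivIoc 1 0).measurable (measurable_subtype_coe hs)
  have hmp := AddCircle.measurePreserving_mk 1 0
  rw [← hmp.map_eq, Measure.map_apply AddCircle.measurable_mk' hmeas,
    Measure.restrict_apply (AddCircle.measurable_mk' hmeas)]
  congr 1
  ext y
  constructor
  · rintro ⟨hy1, hy2⟩
    obtain ⟨x, hx, hxy⟩ := hy1
    have hx01 := h hx
    rcases lt_or_eq_of_le hy2.2 with hlt | heq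
    · have : y = x := inj_on_coe ⟨le_of_lt (by simpa using hy2.1), by simpa using hlt⟩
        ⟨hx01.1.le, hx01.2⟩ hxy.symm
      rwa [this]
    · exfalso
      have h1 : ((1 : ℝ) : UnitAddCircle) = ((0 : ℝ) : UnitAddCircle) := by
        simpa using (AddCircle.coe_period (p := (1:ℝ)))
      have heq1 : y = 1 := by simpa using heq
      have hxy' : (x : UnitAddCircle) = (y : UnitAddCircle) := hxy
      rw [heq1] at hxy'
      have : (x : UnitAddCircle) = ((0:ℝ) : UnitAddCircle) := by rw [hxy']; exact h1
      have := inj_on_coe ⟨hx01.1.le, hx01.2⟩ (by constructor <;> norm_num) this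
      exact absurd this (ne_of_gt hx01.1)
  · intro hy
    exact ⟨⟨y, hy, rfl⟩, hIoc hy⟩

lemma symmDiff_interval_vol {c r r' : ℝ} :
    volume (symmDiff (Set.Ioo (c - r) (c + r)) (Set.Ioo (c - r') (c + r')))
      ≤ ENNReal.ofReal (2*|r - r'|) := by
  set R := max r r' with hR
  set m := min r r' with hm
  have hmR : m ≤ R := min_le_max
  have hsub : symmDiff (Set.Ioo (c - r) (c + r)) (Set.Ioo (c - r') (c + r'))
      ⊆ Set.Ioc (c-R) (c-m) ∪ Set.Ico (c+m) (c+R) := by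
    intro x hx
    rw [Set.mem_symmDiff] at hx
    rcases hx with ⟨⟨h1,h2⟩, h3⟩ | ⟨⟨h1,h2⟩, h3⟩ <;>
      rw [Set.mem_Ioo, not_and_or, not_lt, not_lt] at h3 <;>
      [ (have hrR : r ≤ R := le_max_left _ _);
        (have hrR : r' ≤ R := le_max_right _ _) ] <;>
      rcases h3 with h3 | h3
    · exact Or.inl ⟨by linarith, by
        have : m ≤ r' := min_le_right _ _; linarith⟩
    · exact Or.inr ⟨by have : m ≤ r' := min_le_right _ _; linarith, by linarith⟩
    · exact Or.inl ⟨by linarith, by have : m ≤ r := min_le_left _ _; linarith⟩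
    · exact Or.inr ⟨by have : m ≤ r := min_le_left _ _; linarith, by linarith⟩
  calc volume (symmDiff (Set.Ioo (c - r) (c + r)) (Set.Ioo (c - r') (c + r')))
      ≤ volume (Set.Ioc (c-R) (c-m) ∪ Set.Ico (c+m) (c+R)) := measure_mono hsub
    _ ≤ volume (Set.Ioc (c-R) (c-m)) + volume (Set.Ico (c+m) (c+R)) := measure_union_le _ _
    _ = ENNReal.ofReal (R - m) + ENNReal.ofReal (R - m) := by
        rw [Real.volume_Ioc, Real.volume_Ico,
          show c - m - (c - R) = R - m by ring, show c + R - (c + m) = R - m by ring]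
    _ = ENNReal.ofReal (2*|r - r'|) := by
        have habs : |r - r'| = R - m := by
          rw [abs_sub_comm]; exact (max_sub_min_eq_abs r r').symm
        rw [habs, ← ENNReal.ofReal_add (by linarith) (by linarith)]
        congr 1
        ring

lemma upper_small {N i : ℕ} (hiN : N ≤ i) {g x : ℝ} (h0 : 0 ≤ g) (h1 : g ≤ 1/((i:ℝ)+2))
    (hx : x ∈ Set.Ioo (1/((i:ℝ)+2) - g^3) (1/((i:ℝ)+2) + g^3)) :
    x ∈ Set.Ioo 0 (2/((N:ℝ)+2)) := by
  have hp := hc_pos i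
  have hgc : g^3 ≤ (1/((i:ℝ)+2))^3 := pow_le_pow_left₀ h0 h1 3
  have h01 := interval_subset hgc hx
  refine ⟨h01.1, ?_⟩
  have hcN : 1/((i:ℝ)+2) ≤ 1/((N:ℝ)+2) := by
    apply one_div_le_one_div_of_le (by positivity)
    have : (N:ℝ) ≤ (i:ℝ) := Nat.cast_le.mpr hiN
    linarith
  have hsq : (1/((i:ℝ)+2))^2 ≤ 1/4 := by nlinarith [hc_pos i, hc_le i]
  have hc1 : (1/((i:ℝ)+2))^3 ≤ 1/((i:ℝ)+2) := by
    nlinarith [mul_le_mul_of_nonneg_left hsq hp.le]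
  have h2 : 2/((N:ℝ)+2) = 2*(1/((N:ℝ)+2)) := by ring
  have := hx.2
  linarith

lemma Ugamma_mono_inv {γ γ' : ℕ → ℝ}
    (hγ : ∀ i, 0 ≤ γ i ∧ γ i ≤ 1/((i:ℝ)+2)) (hγ' : ∀ i, 0 ≤ γ' i ∧ γ' i ≤ 1/((i:ℝ)+2))
    (h : Ugamma γ ⊆ Ugamma γ') (i : ℕ) : γ i ≤ γ' i := by
  by_contra hcon
  push_neg at hcon
  have hrr : (γ' i)^3 < (γ i)^3 := pow_lt_pow_left₀ hcon (hγ' i).1 (by norm_num)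
  have hr0 : 0 ≤ (γ' i)^3 := pow_nonneg (hγ' i).1 3
  have hrpos : 0 < (γ i)^3 := lt_of_le_of_lt hr0 hrr
  set x := 1/((i:ℝ)+2) + ((γ' i)^3 + (γ i)^3)/2 with hxdef
  have hxmem : x ∈ Set.Ioo (1/((i:ℝ)+2) - (γ i)^3) (1/((i:ℝ)+2) + (γ i)^3) :=
    ⟨by simp only [hxdef]; linarith, by simp only [hxdef]; linarith⟩
  have hz : (x : UnitAddCircle) ∈ Ugamma γ := Set.mem_iUnion.mpr ⟨i, ⟨x, hxmem, rfl⟩⟩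
  obtain ⟨j, y, hy, hyx⟩ := Set.mem_iUnion.mp (h hz)
  have hbx : x ∈ Set.Ioo (0:ℝ) 1 :=
    interval_subset (pow_le_pow_left₀ (hγ i).1 (hγ i).2 3) hxmem
  have hby : y ∈ Set.Ioo (0:ℝ) 1 :=
    interval_subset (pow_le_pow_left₀ (hγ' j).1 (hγ' j).2 3) hy
  have hyx' : y = x := inj_on_coe ⟨hby.1.le, hby.2⟩ ⟨hbx.1.le, hbx.2⟩ hyx
  rw [hyx'] at hy
  by_cases hji : j = i
  · subst hji
    have := hy.2
    simp only [hxdef] at this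
    linarith
  · have hci : (γ i)^3 ≤ (1/((i:ℝ)+2))^3 := pow_le_pow_left₀ (hγ i).1 (hγ i).2 3
    have hcj : (γ' j)^3 ≤ (1/((j:ℝ)+2))^3 := pow_le_pow_left₀ (hγ' j).1 (hγ' j).2 3
    have hg0 : 0 ≤ (γ' j)^3 := pow_nonneg (hγ' j).1 3
    have hxi1 : 1/((i:ℝ)+2) - (1/((i:ℝ)+2))^3 ≤ x := by
      have := hxmem.1; linarith
    have hxi2 : x ≤ 1/((i:ℝ)+2) + (1/((i:ℝ)+2))^3 := by
      have := hxmem.2; linarith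
    have hxj1 : 1/((j:ℝ)+2) - (1/((j:ℝ)+2))^3 ≤ x := by
      have := hy.1; linarith
    have hxj2 : x ≤ 1/((j:ℝ)+2) + (1/((j:ℝ)+2))^3 := by
      have := hy.2; linarith
    rcases lt_or_gt_of_ne hji with hlt | hgt
    · have := sep hlt
      linarith
    · have := sep hgt
      linarith

end Aux

/-- The map `γ ↦ U_γ` from the Hilbert cube (product topology) to regular open sets with the
metric `d(U,V) = m(U ∆ V)` is continuous and injective. -/
theorem stmt_17 (H : Set (ℕ → ℝ))
    (hH : H = {γ | ∀ i : ℕ, 0 ≤ γ i ∧ γ i ≤ 1 / ((i : ℝ) + 2)}) :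
    (∀ γ₀ ∈ H, ∀ ε > 0, ∃ V ∈ nhds γ₀, ∀ γ ∈ V ∩ H,
        (volume (symmDiff (Ugamma γ) (Ugamma γ₀))).toReal < ε) ∧
      Set.InjOn Ugamma H := by
  subst hH
  constructor
  · -- continuity
    intro γ₀ hγ₀ ε hε
    obtain ⟨N, hN⟩ : ∃ N : ℕ, (4:ℝ)/ε < N := exists_nat_gt _
    have hN0 : (0:ℝ) < N := lt_of_le_of_lt (by positivity) hN
    have hNε : 2/((N:ℝ)+2) < ε/2 := by
      rw [div_lt_div_iff₀ (by positivity) two_pos]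
      have h4 : 4 < ε * N := by
        rw [div_lt_iff₀ hε] at hN
        linarith [hN]
      nlinarith
    set δ := ε/(8*((N:ℝ)+1)) with hδ
    have hδpos : 0 < δ := by positivity
    set V := {γ : ℕ → ℝ | ∀ i < N, |γ i - γ₀ i| < δ} with hV
    have hVeq : V = ⋂ i ∈ Finset.range N, (fun γ : ℕ → ℝ => γ i) ⁻¹' (Metric.ball (γ₀ i) δ) := by
      ext γ
      simp [hV, Real.dist_eq, Finset.mem_range]
    have hVopen : IsOpen V := by
      rw [hVeq]
      exact isOpen_biInter_finset fun i _ =>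
        (Metric.isOpen_ball).preimage (continuous_apply i)
    have hVmem : γ₀ ∈ V := fun i _ => by simpa using hδpos
    refine ⟨V, hVopen.mem_nhds hVmem, ?_⟩
    rintro γ ⟨hγV, hγH⟩
    simp only [Set.mem_setOf_eq] at hγH hγ₀
    set S : Set ℝ :=
      (⋃ i ∈ Finset.range N,
        symmDiff (Set.Ioo (1/((i:ℝ)+2) - (γ i)^3) (1/((i:ℝ)+2) + (γ i)^3))
          (Set.Ioo (1/((i:ℝ)+2) - (γ₀ i)^3) (1/((i:ℝ)+2) + (γ₀ i)^3)))
      ∪ Set.Ioo 0 (2/((N:ℝ)+2)) with hS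
    have hsub : symmDiff (Ugamma γ) (Ugamma γ₀) ⊆ (fun x : ℝ => (x : UnitAddCircle)) '' S := by
      intro z hz
      rw [Set.mem_symmDiff] at hz
      rcases hz with ⟨hz1, hz2⟩ | ⟨hz1, hz2⟩
      · obtain ⟨i, x, hx, hxz⟩ := Set.mem_iUnion.mp hz1
        refine ⟨x, ?_, hxz⟩
        rcases lt_or_ge i N with hiN | hiN
        · refine Set.mem_union_left _ ?_
          refine Set.mem_biUnion (Finset.mem_range.mpr hiN) ?_
          rw [Set.mem_symmDiff]
          refine Or.inl ⟨hx, fun hmem => hz2 ?_⟩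
          exact Set.mem_iUnion.mpr ⟨i, ⟨x, hmem, hxz⟩⟩
        · exact Set.mem_union_right _ (upper_small hiN (hγH i).1 (hγH i).2 hx)
      · obtain ⟨i, x, hx, hxz⟩ := Set.mem_iUnion.mp hz1
        refine ⟨x, ?_, hxz⟩
        rcases lt_or_ge i N with hiN | hiN
        · refine Set.mem_union_left _ ?_
          refine Set.mem_biUnion (Finset.mem_range.mpr hiN) ?_
          rw [Set.mem_symmDiff]
          refine Or.inr ⟨hx, fun hmem => hz2 ?_⟩
          exact Set.mem_iUnion.mpr ⟨i, ⟨x, hmem, hxz⟩⟩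
        · exact Set.mem_union_right _ (upper_small hiN (hγ₀ i).1 (hγ₀ i).2 hx)
    have hS01 : S ⊆ Set.Ioo 0 1 := by
      rw [hS]
      apply Set.union_subset
      · apply Set.iUnion₂_subset
        intro i _
        intro x hx
        rw [Set.mem_symmDiff] at hx
        rcases hx with ⟨h1, _⟩ | ⟨h1, _⟩
        · exact interval_subset (pow_le_pow_left₀ (hγH i).1 (hγH i).2 3) h1
        · exact interval_subset (pow_le_pow_left₀ (hγ₀ i).1 (hγ₀ i).2 3) h1
      · apply Set.Ioo_subset_Ioo_right
        rw [div_le_one (by positivity)]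
        have : (0:ℝ) ≤ N := hN0.le
        linarith
    have hSmeas : MeasurableSet S := by
      rw [hS]
      refine MeasurableSet.union ?_ measurableSet_Ioo
      exact MeasurableSet.biUnion (Finset.range N).countable_toSet
        fun i _ => measurableSet_Ioo.symmDiff measurableSet_Ioo
    have hbound : volume (symmDiff (Ugamma γ) (Ugamma γ₀))
        ≤ ENNReal.ofReal ((N:ℝ)*(2*δ) + 2/((N:ℝ)+2)) := by
      calc volume (symmDiff (Ugamma γ) (Ugamma γ₀))
          ≤ volume ((fun x : ℝ => (x : UnitAddCircle)) '' S) := measure_mono hsub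
        _ = volume S := volume_image_eq hSmeas hS01
        _ ≤ volume (⋃ i ∈ Finset.range N,
              symmDiff (Set.Ioo (1/((i:ℝ)+2) - (γ i)^3) (1/((i:ℝ)+2) + (γ i)^3))
                (Set.Ioo (1/((i:ℝ)+2) - (γ₀ i)^3) (1/((i:ℝ)+2) + (γ₀ i)^3)))
            + volume (Set.Ioo 0 (2/((N:ℝ)+2))) := by
            rw [hS]; exact measure_union_le _ _
        _ ≤ (∑ i ∈ Finset.range N,
              volume (symmDiff (Set.Ioo (1/((i:ℝ)+2) - (γ i)^3) (1/((i:ℝ)+2) + (γ i)^3))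
                (Set.Ioo (1/((i:ℝ)+2) - (γ₀ i)^3) (1/((i:ℝ)+2) + (γ₀ i)^3))))
            + ENNReal.ofReal (2/((N:ℝ)+2)) := by
            apply add_le_add (measure_biUnion_finset_le _ _)
            rw [Real.volume_Ioo]
            exact ENNReal.ofReal_le_ofReal (by linarith)
        _ ≤ (∑ _i ∈ Finset.range N, ENNReal.ofReal (2*δ)) + ENNReal.ofReal (2/((N:ℝ)+2)) := by
            refine add_le_add ?_ le_rfl
            apply Finset.sum_le_sum
            intro i hi
            calc volume (symmDiff (Set.Ioo (1/((i:ℝ)+2) - (γ i)^3) (1/((i:ℝ)+2) + (γ i)^3))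
                  (Set.Ioo (1/((i:ℝ)+2) - (γ₀ i)^3) (1/((i:ℝ)+2) + (γ₀ i)^3)))
                ≤ ENNReal.ofReal (2*|(γ i)^3 - (γ₀ i)^3|) := symmDiff_interval_vol
              _ ≤ ENNReal.ofReal (2*δ) := by
                  apply ENNReal.ofReal_le_ofReal
                  have hhalf := hc_le i
                  have h1 : |(γ i)^3 - (γ₀ i)^3| ≤ |γ i - γ₀ i| :=
                    cube_diff (hγH i).1 (le_trans (hγH i).2 hhalf)
                      (hγ₀ i).1 (le_trans (hγ₀ i).2 hhalf)
                  have h2 := hγV i (Finset.mem_range.mp hi)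
                  linarith
        _ = ENNReal.ofReal ((N:ℝ)*(2*δ)) + ENNReal.ofReal (2/((N:ℝ)+2)) := by
            rw [Finset.sum_const, Finset.card_range, nsmul_eq_mul,
              ← ENNReal.ofReal_natCast N,
              ← ENNReal.ofReal_mul (Nat.cast_nonneg N)]
        _ = ENNReal.ofReal ((N:ℝ)*(2*δ) + 2/((N:ℝ)+2)) := by
            rw [← ENNReal.ofReal_add (by positivity) (by positivity)]
    have hfin : (N:ℝ)*(2*δ) + 2/((N:ℝ)+2) < ε := by
      have hq : (N:ℝ)*(2*δ) = ε * ((N:ℝ)/(4*((N:ℝ)+1))) := by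
        have hNe : ((N:ℝ)+1) ≠ 0 := by positivity
        rw [hδ]
        field_simp
        ring
      have hq2 : (N:ℝ)/(4*((N:ℝ)+1)) ≤ 1/4 := by
        rw [div_le_div_iff₀ (by positivity) (by norm_num)]
        linarith
      have hq3 : (N:ℝ)*(2*δ) ≤ ε/4 := by
        rw [hq]
        calc ε * ((N:ℝ)/(4*((N:ℝ)+1))) ≤ ε * (1/4) :=
              mul_le_mul_of_nonneg_left hq2 hε.le
          _ = ε/4 := by ring
      linarith
    have : volume (symmDiff (Ugamma γ) (Ugamma γ₀)) < ENNReal.ofReal ε :=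
      lt_of_le_of_lt hbound (ENNReal.ofReal_lt_ofReal_iff hε |>.mpr hfin)
    exact ENNReal.toReal_lt_of_lt_ofReal this
  · -- injectivity
    intro γ hγ γ' hγ' heq
    simp only [Set.mem_setOf_eq] at hγ hγ'
    funext i
    exact le_antisymm (Ugamma_mono_inv hγ hγ' heq.subset i)
      (Ugamma_mono_inv hγ' hγ heq.symm.subset i)
end
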